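/- Let M ∈ ℝ^{d×d} be symmetric positive semidefinite whose top two eigenvalues satisfy λ₁ > λ₂ ≥ 0, and let f(x) = (1/2)‖xxᵀ − M‖_F². Then every second-order stationary point of f, i.e., every x with ∇f(x) = 0 and ∇²f(x) ⪰ 0, is a global minimizer of f; specifically, x = √λ₁·v₁ or x = −√λ₁·v₁ where v₁ is a unit eigenvector of M for λ₁. -/

import Mathlib

open scoped RealInnerProductSpace

private lemma grad_aux {d : ℕ} (A : EuclideanSpace ℝ (Fin d) →L[ℝ] EuclideanSpace ℝ (Fin d))
    (hsymm : ∀ y z : EuclideanSpace ℝ (Fin d), ⟪A y, z⟫ = ⟪y, A z⟫) (C : ℝ)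
    (x : EuclideanSpace ℝ (Fin d)) :
    HasGradientAt (fun y : EuclideanSpace ℝ (Fin d) => (1/2) * (⟪y,y⟫^2) - ⟪y, A y⟫ + C)
      ((2*⟪x,x⟫) • x - (2:ℝ) • A x) x := by
  rw [hasGradientAt_iff_hasFDerivAt]
  have h1 : HasFDerivAt (fun y : EuclideanSpace ℝ (Fin d) => ⟪y,y⟫)
      ((fderivInnerCLM ℝ (x, x)).comp ((ContinuousLinearMap.id ℝ (EuclideanSpace ℝ (Fin d))).prod
        (ContinuousLinearMap.id ℝ (EuclideanSpace ℝ (Fin d))))) x :=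
    (hasFDerivAt_id x).inner ℝ (hasFDerivAt_id x)
  have h2 := ((h1.mul h1).const_mul (1/2 : ℝ))
  have h3 : HasFDerivAt (fun y : EuclideanSpace ℝ (Fin d) => ⟪y, A y⟫)
      ((fderivInnerCLM ℝ (x, A x)).comp
        ((ContinuousLinearMap.id ℝ (EuclideanSpace ℝ (Fin d))).prod A)) x :=
    (hasFDerivAt_id x).inner ℝ (A.hasFDerivAt)
  have h4 := (h2.sub h3).add_const C
  refine HasFDerivAt.congr_fderiv (HasFDerivAt.congr_of_eventuallyEq h4 (Filter.Eventually.of_forall fun y => ?_)) ?_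
  · simp [pow_two]
  ext u
  simp only [InnerProductSpace.toDual_apply_apply, ContinuousLinearMap.add_apply,
    ContinuousLinearMap.sub_apply, ContinuousLinearMap.smul_apply, ContinuousLinearMap.comp_apply,
    ContinuousLinearMap.prod_apply, ContinuousLinearMap.coe_id', id, fderivInnerCLM_apply,
    inner_sub_left, inner_smul_left, conj_trivial, smul_eq_mul, ContinuousLinearMap.coe_coe,
    RCLike.inner_apply]
  have h5 : ⟪A x, u⟫ = ⟪x, A u⟫ := hsymm x u
  have h6 : ⟪u, A x⟫ = ⟪A x, u⟫ := real_inner_comm _ _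
  have h7 : ⟪u, x⟫ = ⟪x, u⟫ := real_inner_comm _ _
  rw [h5, h6, h5, h7]
  ring

private lemma hess_aux {d : ℕ} (A : EuclideanSpace ℝ (Fin d) →L[ℝ] EuclideanSpace ℝ (Fin d))
    (x : EuclideanSpace ℝ (Fin d))
    (G : EuclideanSpace ℝ (Fin d) → EuclideanSpace ℝ (Fin d))
    (hG : G = fun y : EuclideanSpace ℝ (Fin d) => (2*⟪y,y⟫) • y - (2:ℝ) • A y) :
    ∀ u : EuclideanSpace ℝ (Fin d), ⟪u, (fderiv ℝ G x) u⟫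
      = 2*⟪x,x⟫*⟪u,u⟫ + 4*⟪x,u⟫^2 - 2*⟪u, A u⟫ := by
  have h1 : HasFDerivAt (fun y : EuclideanSpace ℝ (Fin d) => ⟪y,y⟫)
      ((fderivInnerCLM ℝ (x, x)).comp ((ContinuousLinearMap.id ℝ (EuclideanSpace ℝ (Fin d))).prod
        (ContinuousLinearMap.id ℝ (EuclideanSpace ℝ (Fin d))))) x :=
    (hasFDerivAt_id x).inner ℝ (hasFDerivAt_id x)
  have hder := ((h1.const_mul (2:ℝ)).smul (hasFDerivAt_id x)).sub
    ((A.hasFDerivAt).const_smul (2:ℝ))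
  simp only [id_eq] at hder
  rw [hG, (show HasFDerivAt (fun y : EuclideanSpace ℝ (Fin d) => (2*⟪y,y⟫) • y - (2:ℝ) • A y) _ x from hder).fderiv]
  intro u
  simp only [ContinuousLinearMap.add_apply, ContinuousLinearMap.sub_apply,
    ContinuousLinearMap.smul_apply, ContinuousLinearMap.comp_apply, ContinuousLinearMap.prod_apply,
    ContinuousLinearMap.coe_id', id, fderivInnerCLM_apply, ContinuousLinearMap.smulRight_apply,
    ContinuousLinearMap.coe_coe, inner_add_right, inner_sub_right, real_inner_smul_right,
    smul_eq_mul, nsmul_eq_mul]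
  have h7 : ⟪u, x⟫ = ⟪x, u⟫ := real_inner_comm _ _
  rw [h7]
  ring

set_option maxHeartbeats 1000000 in
/-- For a symmetric PSD matrix `M` with eigengap `λ₁ > λ₂ ≥ 0` between its
top two eigenvalues, every second-order stationary point of
`f(x) = (1/2)‖xxᵀ - M‖_F²` is a global minimizer; specifically `x = ±√λ₁ • v₁`. -/
theorem sosp_is_global_min_top_eigenvector
    (d : ℕ) (hd : 2 ≤ d) (M : Matrix (Fin d) (Fin d) ℝ)
    (hpsd : M.PosSemidef)
    (lam : Fin d → ℝ) (v : Fin d → EuclideanSpace ℝ (Fin d))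
    (hortho : Orthonormal ℝ v)
    (heig : ∀ i, M.mulVec (v i) = lam i • v i)
    (hmono : ∀ i j : Fin d, i ≤ j → lam j ≤ lam i)
    (hgap : lam ⟨1, by omega⟩ < lam ⟨0, by omega⟩)
    (hnn : 0 ≤ lam ⟨1, by omega⟩)
    (f : EuclideanSpace ℝ (Fin d) → ℝ)
    (hf : f = fun x => (1 / 2) * ∑ i, ∑ j, (x i * x j - M i j) ^ 2)
    (x : EuclideanSpace ℝ (Fin d))
    (hgrad : gradient f x = 0)
    (hhess : ∀ u : EuclideanSpace ℝ (Fin d), 0 ≤ ⟪u, (fderiv ℝ (gradient f) x) u⟫) :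
    (∀ y, f x ≤ f y) ∧
      (x = Real.sqrt (lam ⟨0, by omega⟩) • v ⟨0, by omega⟩ ∨
        x = -(Real.sqrt (lam ⟨0, by omega⟩)) • v ⟨0, by omega⟩) := by
  have hd0 : 0 < d := by omega
  have hd1 : 1 < d := by omega
  obtain ⟨i0, hi0⟩ : ∃ i : Fin d, i = ⟨0, by omega⟩ := ⟨_, rfl⟩
  obtain ⟨i1, hi1⟩ : ∃ i : Fin d, i = ⟨1, by omega⟩ := ⟨_, rfl⟩
  have hgap' : lam i1 < lam i0 := by rw [hi0, hi1]; exact hgap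
  have hnn' : 0 ≤ lam i1 := by rw [hi1]; exact hnn
  have hi0le : ∀ j : Fin d, i0 ≤ j := by
    intro j; rw [hi0]; exact Fin.le_def.mpr (Nat.zero_le _)
  have hi1le : ∀ j : Fin d, j ≠ i0 → i1 ≤ j := by
    intro j hj
    have hjv : (j : ℕ) ≠ 0 := by
      intro h; exact hj (by rw [hi0]; exact Fin.ext h)
    rw [hi1]; exact Fin.le_def.mpr (show 1 ≤ (j:ℕ) from Nat.one_le_iff_ne_zero.mpr hjv)
  set A : EuclideanSpace ℝ (Fin d) →L[ℝ] EuclideanSpace ℝ (Fin d) :=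
    LinearMap.toContinuousLinearMap (Matrix.toEuclideanLin M) with hAdef
  have hAapp : ∀ (y : EuclideanSpace ℝ (Fin d)) i, A y i = ∑ j, M i j * y j := by
    intro y i
    simp [hAdef, Matrix.toEuclideanLin_apply, Matrix.mulVec, dotProduct]
  have hAv : ∀ i, A (v i) = lam i • v i := by
    intro i
    have h := heig i
    ext k
    simp [hAdef, Matrix.toEuclideanLin_apply]
    rw [h]
    rfl
  have hsymm : ∀ y z : EuclideanSpace ℝ (Fin d), ⟪A y, z⟫ = ⟪y, A z⟫ := by
    have h := Matrix.isHermitian_iff_isSymmetric.mp hpsd.isHermitian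
    exact fun y z => h y z
  have hfF : f = fun y : EuclideanSpace ℝ (Fin d) =>
      (1/2) * (⟪y,y⟫^2) - ⟪y, A y⟫ + ((1/2) * ∑ i, ∑ j, (M i j)^2) := by
    rw [hf]; funext y
    simp only [PiLp.inner_apply, RCLike.inner_apply, conj_trivial, hAapp]
    rw [pow_two, Finset.sum_mul_sum]
    rw [Finset.mul_sum, Finset.mul_sum, Finset.mul_sum, ← Finset.sum_sub_distrib,
      ← Finset.sum_add_distrib]
    refine Finset.sum_congr rfl fun i _ => ?_
    simp only [Finset.mul_sum, Finset.sum_mul, ← Finset.sum_sub_distrib, ← Finset.sum_add_distrib]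
    exact Finset.sum_congr rfl fun j _ => by ring
  have hgradeq : gradient f
      = fun y : EuclideanSpace ℝ (Fin d) => (2*⟪y,y⟫) • y - (2:ℝ) • A y := by
    funext y
    rw [hfF]
    exact (grad_aux A hsymm _ y).gradient
  -- stationarity : A x = ⟪x,x⟫ • x
  have hstat : A x = ⟪x,x⟫ • x := by
    have h0 : (2*⟪x,x⟫) • x - (2:ℝ) • A x = 0 := by
      rw [← congrFun hgradeq x]; exact hgrad
    rw [sub_eq_zero] at h0
    have := congrArg (fun z : EuclideanSpace ℝ (Fin d) => (1/2 : ℝ) • z) h0.symm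
    simpa [smul_smul] using this
  -- Hessian quadratic form
  have hquad : ∀ u : EuclideanSpace ℝ (Fin d),
      0 ≤ 2*⟪x,x⟫*⟪u,u⟫ + 4*⟪x,u⟫^2 - 2*⟪u, A u⟫ := by
    intro u
    have h := hhess u
    rw [hgradeq, hess_aux A x _ rfl u] at h
    exact h
  -- orthonormal basis expansion facts
  have hne : Nonempty (Fin d) := ⟨i0⟩
  have hcard : Fintype.card (Fin d) = Module.finrank ℝ (EuclideanSpace ℝ (Fin d)) := by
    simp [finrank_euclideanSpace]
  have hb : ⇑((basisOfOrthonormalOfCardEqFinrank hortho hcard).toOrthonormalBasis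
      (by rw [coe_basisOfOrthonormalOfCardEqFinrank hortho hcard]; exact hortho)) = v := by
    rw [Module.Basis.coe_toOrthonormalBasis, coe_basisOfOrthonormalOfCardEqFinrank]
  have hrepr : ∀ y : EuclideanSpace ℝ (Fin d), ∑ i, ⟪v i, y⟫ • v i = y := by
    intro y
    have := ((basisOfOrthonormalOfCardEqFinrank hortho hcard).toOrthonormalBasis
      (by rw [coe_basisOfOrthonormalOfCardEqFinrank hortho hcard]; exact hortho)).sum_repr' y
    rwa [hb] at this
  have hyy : ∀ y : EuclideanSpace ℝ (Fin d), ⟪y, y⟫ = ∑ i, ⟪v i, y⟫^2 := by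
    intro y
    nth_rewrite 2 [← hrepr y]
    rw [inner_sum]
    refine Finset.sum_congr rfl fun i _ => ?_
    rw [real_inner_smul_right, real_inner_comm y (v i)]
    ring
  have hyAy : ∀ y : EuclideanSpace ℝ (Fin d), ⟪y, A y⟫ = ∑ i, lam i * ⟪v i, y⟫^2 := by
    intro y
    nth_rewrite 2 [← hrepr y]
    rw [map_sum, inner_sum]
    refine Finset.sum_congr rfl fun i _ => ?_
    rw [map_smul, hAv, smul_smul, real_inner_smul_right, real_inner_comm y (v i)]
    ring
  have hunit : ∀ i, ⟪v i, v i⟫ = 1 := by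
    intro i
    rw [real_inner_self_eq_norm_sq, hortho.1 i]; norm_num
  -- eigen coefficient relation
  have heigc : ∀ j, lam j * ⟪v j, x⟫ = ⟪x,x⟫ * ⟪v j, x⟫ := by
    intro j
    have h1 : ⟪v j, A x⟫ = ⟪x,x⟫ * ⟪v j, x⟫ := by rw [hstat, real_inner_smul_right]
    have h2 : ⟪v j, A x⟫ = lam j * ⟪v j, x⟫ := by
      nth_rewrite 1 [← hrepr x]
      rw [map_sum, inner_sum]
      have he : ∀ i, ⟪v j, (⟪v i, x⟫ : ℝ) • A (v i)⟫ = (⟪v i, x⟫ * lam i) * ⟪v j, v i⟫ := by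
        intro i
        rw [hAv, smul_smul, real_inner_smul_right]
      simp only [map_smul, he]
      rw [Finset.sum_eq_single j]
      · rw [hunit]; ring
      · intro i _ hij
        rw [hortho.2 (show j ≠ i from fun h => hij h.symm)]
        ring
      · intro h; exact absurd (Finset.mem_univ j) h
    linarith
  have hsmax : ∀ j : Fin d, ⟪v j, x⟫ ≠ 0 → ⟪x,x⟫ = lam j := by
    intro j hj
    exact (mul_right_cancel₀ hj (heigc j)).symm
  have hl0pos : (0:ℝ) < lam i0 := lt_of_le_of_lt hnn' hgap'
  have hkey : 0 ≤ 2*⟪x,x⟫ + 4*⟪v i0, x⟫^2 - 2*lam i0 := by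
    have h := hquad (v i0)
    rw [hunit] at h
    have hAvv : ⟪v i0, A (v i0)⟫ = lam i0 := by
      rw [hAv, real_inner_smul_right, hunit]; ring
    rw [hAvv] at h
    have hco : ⟪x, v i0⟫ = ⟪v i0, x⟫ := real_inner_comm _ _
    rw [hco] at h
    linarith
  have hmain : ⟪x,x⟫ = lam i0 ∧ ∀ j, j ≠ i0 → ⟪v j, x⟫ = 0 := by
    by_cases hx0 : x = 0
    · exfalso
      have hs0 : ⟪x,x⟫ = (0:ℝ) := by rw [hx0, inner_zero_right]
      have hc0 : ⟪v i0, x⟫ = (0:ℝ) := by rw [hx0, inner_zero_right]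
      rw [hs0, hc0] at hkey
      nlinarith
    · obtain ⟨j, hj⟩ : ∃ j, ⟪v j, x⟫ ≠ 0 := by
        by_contra h
        push_neg at h
        apply hx0
        rw [← hrepr x]
        refine Finset.sum_eq_zero fun i _ => ?_
        rw [h i, zero_smul]
      have hsj : ⟪x,x⟫ = lam j := hsmax j hj
      have hc00 : ⟪v i0, x⟫ ≠ 0 := by
        intro h0
        rw [h0] at hkey
        have hsge : lam i0 ≤ ⟪x,x⟫ := by nlinarith
        have hjne : j ≠ i0 := by
          intro h; rw [h] at hj; exact hj h0
        have h1 := hmono i1 j (hi1le j hjne)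
        linarith
      have hs0 : ⟪x,x⟫ = lam i0 := hsmax _ hc00
      refine ⟨hs0, fun j' hj' => ?_⟩
      by_contra hc
      have h1 := hsmax j' hc
      have h2 := hmono i1 j' (hi1le j' hj')
      linarith
  obtain ⟨hs0, hczero⟩ := hmain
  have hxc : x = ⟪v i0, x⟫ • v i0 := by
    nth_rewrite 1 [← hrepr x]
    rw [Finset.sum_eq_single i0]
    · intro i _ hi
      rw [hczero i hi, zero_smul]
    · intro h; exact absurd (Finset.mem_univ _) h
  have hc2 : ⟪v i0, x⟫^2 = lam i0 := by
    have h := hyy x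
    rw [Finset.sum_eq_single i0] at h
    · exact h.symm.trans hs0
    · intro i _ hi
      rw [hczero i hi]; ring
    · intro h'; exact absurd (Finset.mem_univ _) h'
  constructor
  · intro y
    have hxAx : ⟪x, A x⟫ = lam i0 * lam i0 := by
      rw [hstat, real_inner_smul_right, hs0]
    have hylam : ⟪y, A y⟫ ≤ lam i0 * ⟪y, y⟫ := by
      rw [hyAy, hyy, Finset.mul_sum]
      refine Finset.sum_le_sum fun i _ => ?_
      have h1 : lam i ≤ lam i0 := hmono i0 i (hi0le i)
      nlinarith [sq_nonneg (⟪v i, y⟫ : ℝ)]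
    rw [hfF]
    simp only
    rw [hxAx, hs0]
    nlinarith [sq_nonneg ((⟪y, y⟫ : ℝ) - lam i0)]
  · have habs : |⟪v i0, x⟫| = Real.sqrt (lam i0) := by
      rw [← hc2, Real.sqrt_sq_eq_abs]
    rcases abs_cases (⟪v i0, x⟫ : ℝ) with ⟨h1, _⟩ | ⟨h1, _⟩
    · left
      rw [hi0] at habs hxc h1
      rw [← h1, habs] at hxc
      exact hxc
    · right
      rw [hi0] at habs hxc h1
      have hc : (⟪v (⟨0, by omega⟩ : Fin d), x⟫ : ℝ) = -|⟪v (⟨0, by omega⟩ : Fin d), x⟫| := by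
        rw [h1]; ring
      rw [habs] at hc
      rw [hc] at hxc
      rw [hxc, neg_smul]
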